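/- If G is a graph satisfying γ_gr^t(G) = 2·bc(G), then for every graph H, γ_gr^t(G × H) = γ_gr^t(G) · γ_gr^t(H), where × denotes the direct product. -/

import Mathlib

open SimpleGraph

/-- A legal open neighborhood sequence in `G`. -/
def IsOpenLegal {α : Type*} (G : SimpleGraph α) (L : List α) : Prop :=
  L.Nodup ∧ ∀ i : Fin L.length, ∃ w, G.Adj (L.get i) w ∧
    ∀ j : Fin L.length, j < i → ¬ G.Adj (L.get j) w

/-- The Grundy total domination number of `G`. -/
noncomputable def grundyT {α : Type*} (G : SimpleGraph α) : ℕ :=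
  sSup {n | ∃ L : List α, IsOpenLegal G L ∧ L.length = n}

/-- A legal closed neighborhood (dominating) sequence in `G`. -/
def IsClosedLegal {α : Type*} (G : SimpleGraph α) (L : List α) : Prop :=
  L.Nodup ∧ ∀ i : Fin L.length, ∃ w, (G.Adj (L.get i) w ∨ L.get i = w) ∧
    ∀ j : Fin L.length, j < i → ¬ (G.Adj (L.get j) w ∨ L.get j = w)

/-- The Grundy domination number of `G`. -/
noncomputable def grundyDom {α : Type*} (G : SimpleGraph α) : ℕ :=
  sSup {n | ∃ L : List α, IsClosedLegal G L ∧ L.length = n}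

/-- The direct (tensor) product of simple graphs. -/
def directProd {α β : Type*} (G : SimpleGraph α) (H : SimpleGraph β) : SimpleGraph (α × β) where
  Adj x y := G.Adj x.1 y.1 ∧ H.Adj x.2 y.2
  symm := ⟨fun _ _ h => ⟨h.1.symm, h.2.symm⟩⟩
  loopless := ⟨fun _ h => G.irrefl h.1⟩

/-- The lexicographic product of simple graphs. -/
def lexProd {α β : Type*} (G : SimpleGraph α) (H : SimpleGraph β) : SimpleGraph (α × β) where
  Adj x y := G.Adj x.1 y.1 ∨ (x.1 = y.1 ∧ H.Adj x.2 y.2)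
  symm := by
    constructor
    rintro x y (h | ⟨h1, h2⟩)
    · exact Or.inl h.symm
    · exact Or.inr ⟨h1.symm, h2.symm⟩
  loopless := by
    constructor
    rintro x (h | ⟨_, h⟩)
    · exact G.irrefl h
    · exact H.irrefl h

/-- The strong product of simple graphs. -/
def strongProd {α β : Type*} (G : SimpleGraph α) (H : SimpleGraph β) : SimpleGraph (α × β) where
  Adj x y := (G.Adj x.1 y.1 ∧ x.2 = y.2) ∨ (x.1 = y.1 ∧ H.Adj x.2 y.2) ∨
    (G.Adj x.1 y.1 ∧ H.Adj x.2 y.2)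
  symm := by
    constructor
    rintro x y (⟨h, e⟩ | ⟨e, h⟩ | ⟨h1, h2⟩)
    · exact Or.inl ⟨h.symm, e.symm⟩
    · exact Or.inr (Or.inl ⟨e.symm, h.symm⟩)
    · exact Or.inr (Or.inr ⟨h1.symm, h2.symm⟩)
  loopless := by
    constructor
    rintro x (⟨h, _⟩ | ⟨_, h⟩ | ⟨h, _⟩)
    · exact G.irrefl h
    · exact H.irrefl h
    · exact G.irrefl h

/-- The minimum number of complete bipartite subgraphs of `G` covering all edges of `G`. -/
noncomputable def bc {α : Type*} (G : SimpleGraph α) : ℕ :=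
  sInf {k | ∃ A B : Fin k → Set α,
    (∀ i a b, a ∈ A i → b ∈ B i → G.Adj a b) ∧
    (∀ u v, G.Adj u v → ∃ i, (u ∈ A i ∧ v ∈ B i) ∨ (v ∈ A i ∧ u ∈ B i))}

/-- `aD G L` is the number of entries of `L` not adjacent to any earlier entry. -/
noncomputable def aD {α : Type*} (G : SimpleGraph α) (L : List α) : ℕ :=
  {i : Fin L.length | ∀ j : Fin L.length, j < i → ¬ G.Adj (L.get j) (L.get i)}.ncard

/-- The vertex cover number of `G`. -/
noncomputable def vertexCoverNum {α : Type*} (G : SimpleGraph α) : ℕ :=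
  sInf {n | ∃ S : Finset α, S.card = n ∧ ∀ u v, G.Adj u v → u ∈ S ∨ v ∈ S}

/-- The independence number of `G`. -/
noncomputable def indepNum {α : Type*} (G : SimpleGraph α) : ℕ :=
  sSup {n | ∃ S : Finset α, S.card = n ∧ ∀ u ∈ S, ∀ v ∈ S, ¬ G.Adj u v}

section Auxiliary

variable {α β : Type*}

lemma openLegal_nil (G : SimpleGraph α) : IsOpenLegal G ([] : List α) :=
  ⟨List.nodup_nil, fun i => i.elim0⟩

lemma grundyT_set_nonempty (G : SimpleGraph α) :
    {n | ∃ L : List α, IsOpenLegal G L ∧ L.length = n}.Nonempty :=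
  ⟨0, [], openLegal_nil G, rfl⟩

lemma grundyT_set_bddAbove [Fintype α] (G : SimpleGraph α) :
    BddAbove {n | ∃ L : List α, IsOpenLegal G L ∧ L.length = n} :=
  ⟨Fintype.card α, fun n hn => by obtain ⟨L, hL, rfl⟩ := hn; exact hL.1.length_le_card⟩

lemma le_grundyT [Fintype α] {G : SimpleGraph α} {L : List α} (h : IsOpenLegal G L) :
    L.length ≤ grundyT G :=
  le_csSup (grundyT_set_bddAbove G) ⟨L, h, rfl⟩

lemma grundyT_le {G : SimpleGraph α} {m : ℕ}
    (h : ∀ L : List α, IsOpenLegal G L → L.length ≤ m) : grundyT G ≤ m :=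
  csSup_le (grundyT_set_nonempty G) (fun n hn => by obtain ⟨L, hL, rfl⟩ := hn; exact h L hL)

lemma exists_grundyT [Fintype α] (G : SimpleGraph α) :
    ∃ L : List α, IsOpenLegal G L ∧ L.length = grundyT G :=
  Nat.sSup_mem (grundyT_set_nonempty G) (grundyT_set_bddAbove G)

lemma bc_spec [Fintype α] (G : SimpleGraph α) :
    ∃ A B : Fin (bc G) → Set α,
      (∀ i a b, a ∈ A i → b ∈ B i → G.Adj a b) ∧
      (∀ u v, G.Adj u v → ∃ i, (u ∈ A i ∧ v ∈ B i) ∨ (v ∈ A i ∧ u ∈ B i)) := by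
  have hne : {k | ∃ A B : Fin k → Set α,
      (∀ i a b, a ∈ A i → b ∈ B i → G.Adj a b) ∧
      (∀ u v, G.Adj u v → ∃ i, (u ∈ A i ∧ v ∈ B i) ∨ (v ∈ A i ∧ u ∈ B i))}.Nonempty := by
    classical
    refine ⟨Fintype.card (α × α), ?_⟩
    set e := (Fintype.equivFin (α × α)).symm with he
    refine ⟨fun i => {a | a = (e i).1 ∧ G.Adj (e i).1 (e i).2},
            fun i => {b | b = (e i).2 ∧ G.Adj (e i).1 (e i).2}, ?_, ?_⟩
    · rintro i a b ⟨rfl, h⟩ ⟨rfl, -⟩; exact h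
    · intro u v h
      refine ⟨e.symm (u, v), Or.inl ?_⟩
      have hev : e (e.symm (u, v)) = (u, v) := e.apply_symm_apply _
      constructor
      · exact ⟨by rw [hev], by rw [hev]; exact h⟩
      · exact ⟨by rw [hev], by rw [hev]; exact h⟩
  exact Nat.sInf_mem hne

lemma prod_legal {G : SimpleGraph α} {H : SimpleGraph β} {L : List α} {M : List β}
    (hL : IsOpenLegal G L) (hM : IsOpenLegal H M) :
    ∃ P : List (α × β), IsOpenLegal (directProd G H) P ∧ P.length = M.length * L.length := by
  have hapos : ∀ _ : Fin (M.length * L.length), 0 < L.length := fun k => by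
    rcases Nat.eq_zero_or_pos L.length with h | h
    · exact absurd k.isLt (by simp [h])
    · exact h
  have hmod : ∀ k : Fin (M.length * L.length), (k : ℕ) % L.length < L.length :=
    fun k => Nat.mod_lt _ (hapos k)
  have hdiv : ∀ k : Fin (M.length * L.length), (k : ℕ) / L.length < M.length :=
    fun k => Nat.div_lt_of_lt_mul (lt_of_lt_of_le k.isLt (le_of_eq (mul_comm _ _)))
  set f : Fin (M.length * L.length) → α × β :=
    fun k => (L.get ⟨(k : ℕ) % L.length, hmod k⟩, M.get ⟨(k : ℕ) / L.length, hdiv k⟩) with hf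
  refine ⟨List.ofFn f, ⟨?_, ?_⟩, by rw [List.length_ofFn]⟩
  · rw [List.nodup_ofFn]
    intro k1 k2 hk
    rw [hf, Prod.mk.injEq] at hk
    have h1 : (k1 : ℕ) % L.length = (k2 : ℕ) % L.length :=
      Fin.mk.injEq _ _ _ _ ▸ (hL.1.get_inj_iff).mp hk.1
    have h2 : (k1 : ℕ) / L.length = (k2 : ℕ) / L.length :=
      Fin.mk.injEq _ _ _ _ ▸ (hM.1.get_inj_iff).mp hk.2
    have e1 := Nat.div_add_mod (k1 : ℕ) L.length
    have e2 := Nat.div_add_mod (k2 : ℕ) L.length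
    apply Fin.ext
    rw [← e1, ← e2, h1, h2]
  · intro i
    obtain ⟨w, hw1, hw2⟩ :=
      hL.2 ⟨((Fin.cast (List.length_ofFn (f := f)) i : Fin (M.length * L.length)) : ℕ) % L.length, hmod _⟩
    obtain ⟨x, hx1, hx2⟩ :=
      hM.2 ⟨((Fin.cast (List.length_ofFn (f := f)) i : Fin (M.length * L.length)) : ℕ) / L.length, hdiv _⟩
    refine ⟨(w, x), ?_, ?_⟩
    · rw [List.get_ofFn]
      exact ⟨hw1, hx1⟩
    · intro j hj hadj
      rw [List.get_ofFn] at hadj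
      obtain ⟨hg, hh⟩ := hadj
      have hji : (j : ℕ) < (i : ℕ) := hj
      have hd : (j : ℕ) / L.length ≤ (i : ℕ) / L.length := Nat.div_le_div_right (le_of_lt hji)
      rcases hd.lt_or_eq with h | h
      · exact hx2 ⟨(j : ℕ) / L.length, hdiv (Fin.cast (List.length_ofFn (f := f)) j)⟩ (by simpa using h)
          (by simpa [hf] using hh)
      · have e1 := Nat.div_add_mod (j : ℕ) L.length
        have e2 := Nat.div_add_mod (i : ℕ) L.length
        rw [h] at e1
        have hm : (j : ℕ) % L.length < (i : ℕ) % L.length := by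
          have : L.length * ((i : ℕ) / L.length) + (j : ℕ) % L.length <
              L.length * ((i : ℕ) / L.length) + (i : ℕ) % L.length := by
            rw [e1, e2]; exact hji
          exact Nat.lt_of_add_lt_add_left this
        exact hw2 ⟨(j : ℕ) % L.length, hmod (Fin.cast (List.length_ofFn (f := f)) j)⟩
          (by simpa using hm) (by simpa [hf] using hg)

lemma length_le_of_legal [Fintype α] [Fintype β] (G : SimpleGraph α) (H : SimpleGraph β)
    (L : List (α × β)) (hL : IsOpenLegal (directProd G H) L) :
    L.length ≤ 2 * bc G * grundyT H := by
  classical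
  obtain ⟨A, B, hAB, hcov⟩ := bc_spec G
  obtain ⟨hnd, hleg⟩ := hL
  choose w hw1 hw2 using hleg
  have hlab : ∀ i : Fin L.length, ∃ tb : Fin (bc G) × Bool,
      if tb.2 then ((L.get i).1 ∈ A tb.1 ∧ (w i).1 ∈ B tb.1)
      else ((w i).1 ∈ A tb.1 ∧ (L.get i).1 ∈ B tb.1) := by
    intro i
    obtain ⟨t, ht⟩ := hcov _ _ (hw1 i).1
    rcases ht with h | h
    · exact ⟨(t, true), by simpa using h⟩
    · exact ⟨(t, false), by simpa using h⟩
  choose lab hlabspec using hlab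
  have key : ∀ i₁ i₂ : Fin L.length, lab i₁ = lab i₂ → G.Adj (L.get i₁).1 ((w i₂).1) := by
    intro i₁ i₂ he
    have h1 := hlabspec i₁
    have h2 := hlabspec i₂
    rw [he] at h1
    rcases hb : (lab i₂).2 with _ | _
    · rw [hb] at h1 h2
      simp only [if_neg Bool.false_ne_true, Bool.false_eq_true, if_false] at h1 h2
      exact (hAB _ _ _ h2.1 h1.2).symm
    · rw [hb] at h1 h2
      simp only [if_true] at h1 h2
      exact hAB _ _ _ h1.1 h2.2
  have key2 : ∀ i₁ i₂ : Fin L.length, i₁ < i₂ → lab i₁ = lab i₂ →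
      ¬ H.Adj (L.get i₁).2 ((w i₂).2) := by
    intro i₁ i₂ hlt he hadj
    exact hw2 i₂ i₁ hlt ⟨key i₁ i₂ he, hadj⟩
  have hfiber : ∀ tb : Fin (bc G) × Bool,
      (Finset.univ.filter (fun i => lab i = tb)).card ≤ grundyT H := by
    intro tb
    set s := Finset.univ.filter (fun i => lab i = tb) with hs
    set ls := s.sort (· ≤ ·) with hls
    have hsort : ls.Pairwise (· < ·) := (Finset.sortedLT_sort s).pairwise
    have hmem : ∀ i ∈ ls, lab i = tb := by
      intro i hi
      have := (Finset.mem_sort (α := Fin L.length) (· ≤ ·)).mp hi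
      rw [hs] at this
      exact (Finset.mem_filter.mp this).2
    have hlen : ls.length = s.card := Finset.length_sort _
    have hLtlen : (ls.map (fun i => (L.get i).2)).length = ls.length := List.length_map _
    have hlegal : IsOpenLegal H (ls.map (fun i => (L.get i).2)) := by
      constructor
      · show (ls.map _).Pairwise (· ≠ ·)
        rw [List.pairwise_map]
        refine hsort.imp_of_mem ?_
        intro i₁ i₂ h1 h2 hlt heq
        exact key2 i₁ i₂ hlt ((hmem _ h1).trans (hmem _ h2).symm)
          (by rw [heq]; exact (hw1 i₂).2)
      · intro j
        have hjlen : (j : ℕ) < ls.length := by rw [← hLtlen]; exact j.isLt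
        refine ⟨(w (ls.get ⟨j, hjlen⟩)).2, ?_, ?_⟩
        · simp only [List.get_eq_getElem, List.getElem_map]
          exact (hw1 _).2
        · intro j' hj' hadj
          have hj'len : (j' : ℕ) < ls.length := by rw [← hLtlen]; exact j'.isLt
          simp only [List.get_eq_getElem, List.getElem_map] at hadj
          have hlt : ls.get ⟨j', hj'len⟩ < ls.get ⟨j, hjlen⟩ :=
            hsort.sortedLT (show (⟨(j' : ℕ), hj'len⟩ : Fin ls.length) < ⟨j, hjlen⟩ from hj')
          exact key2 _ _ hlt
            ((hmem _ (List.get_mem ls _)).trans (hmem _ (List.get_mem ls _)).symm) hadj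
    calc s.card = (ls.map (fun i => (L.get i).2)).length := by rw [hLtlen, hlen]
      _ ≤ grundyT H := le_grundyT hlegal
  have hcount : (Finset.univ : Finset (Fin L.length)).card =
      ∑ tb : Fin (bc G) × Bool, (Finset.univ.filter (fun i => lab i = tb)).card :=
    Finset.card_eq_sum_card_fiberwise (fun x _ => Finset.mem_univ _)
  calc L.length = (Finset.univ : Finset (Fin L.length)).card := by simp
    _ = ∑ tb : Fin (bc G) × Bool, (Finset.univ.filter (fun i => lab i = tb)).card := hcount
    _ ≤ ∑ _tb : Fin (bc G) × Bool, grundyT H := Finset.sum_le_sum (fun tb _ => hfiber tb)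
    _ = 2 * bc G * grundyT H := by
        rw [Finset.sum_const, Finset.card_univ, Fintype.card_prod, Fintype.card_fin,
          Fintype.card_bool, smul_eq_mul]
        ring

end Auxiliary

theorem grundyT_directProd_of_eq_two_bc {α β : Type*} [Fintype α] [Fintype β]
    (G : SimpleGraph α) (hG : grundyT G = 2 * bc G) (H : SimpleGraph β) :
    grundyT (directProd G H) = grundyT G * grundyT H := by
  apply le_antisymm
  · rw [hG]
    exact grundyT_le (fun L hL => length_le_of_legal G H L hL)
  · obtain ⟨L, hL, hLlen⟩ := exists_grundyT G
    obtain ⟨M, hM, hMlen⟩ := exists_grundyT H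
    obtain ⟨P, hP, hPlen⟩ := prod_legal hL hM
    calc grundyT G * grundyT H = P.length := by rw [hPlen, hLlen, hMlen, mul_comm]
      _ ≤ grundyT (directProd G H) := le_grundyT hP
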